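/- Let G be a finite simple graph containing no theta, pyramid, prism, or turtle as an induced subgraph, let C be a proper separator of G with full components L and R, and let H be a (C,c1,c2)-hole with frame F(H) = (c1,c2,ℓ1',ℓ1,r1,r1',ℓ2',ℓ2,r2,r2'). Assume v ∈ V(G)∖V(H) has a neighbor in the interior of H_L minus {ℓ1,ℓ2} and a neighbor in the interior of H_R minus {r1,r2}. Then v is (c1,c2)-heavy with respect to H. -/

import Mathlib

namespace Paper

open SimpleGraph

variable {V : Type*}

/-- The set of neighbors of `v` inside the set `H`. -/
def nbrsIn (G : SimpleGraph V) (v : V) (H : Set V) : Set V :=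
  {u | u ∈ H ∧ G.Adj v u}

/-- The vertex set of a walk. -/
def supp {G : SimpleGraph V} {a b : V} (P : G.Walk a b) : Set V :=
  {v | v ∈ P.support}

/-- `H` is a hole of `G`: an induced cycle of length at least 4.  (A finite
graph is a cycle iff it is connected and `2`-regular.) -/
def IsHole (G : SimpleGraph V) (H : Set V) : Prop :=
  H.Finite ∧ 4 ≤ H.ncard ∧ (G.induce H).Connected ∧
    ∀ v ∈ H, (nbrsIn G v H).ncard = 2

/-- `G` contains a theta as an induced subgraph. -/
def HasTheta (G : SimpleGraph V) : Prop :=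
  ∃ (a b : V) (P₁ P₂ P₃ : G.Walk a b),
    a ≠ b ∧ ¬ G.Adj a b ∧
    P₁.IsPath ∧ P₂.IsPath ∧ P₃.IsPath ∧
    2 ≤ P₁.length ∧ 2 ≤ P₂.length ∧ 2 ≤ P₃.length ∧
    (∀ v, v ∈ P₁.support → v ∈ P₂.support → v = a ∨ v = b) ∧
    (∀ v, v ∈ P₁.support → v ∈ P₃.support → v = a ∨ v = b) ∧
    (∀ v, v ∈ P₂.support → v ∈ P₃.support → v = a ∨ v = b) ∧
    IsHole G (supp P₁ ∪ supp P₂) ∧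
    IsHole G (supp P₁ ∪ supp P₃) ∧
    IsHole G (supp P₂ ∪ supp P₃)

/-- `G` contains a pyramid as an induced subgraph. -/
def HasPyramid (G : SimpleGraph V) : Prop :=
  ∃ (a b₁ b₂ b₃ : V) (P₁ : G.Walk a b₁) (P₂ : G.Walk a b₂) (P₃ : G.Walk a b₃),
    G.Adj b₁ b₂ ∧ G.Adj b₂ b₃ ∧ G.Adj b₁ b₃ ∧
    P₁.IsPath ∧ P₂.IsPath ∧ P₃.IsPath ∧
    (∀ v, v ∈ P₁.support → v ∈ P₂.support → v = a) ∧
    (∀ v, v ∈ P₁.support → v ∈ P₃.support → v = a) ∧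
    (∀ v, v ∈ P₂.support → v ∈ P₃.support → v = a) ∧
    ¬ (P₁.length = 1 ∧ P₂.length = 1) ∧
    ¬ (P₁.length = 1 ∧ P₃.length = 1) ∧
    ¬ (P₂.length = 1 ∧ P₃.length = 1) ∧
    IsHole G (supp P₁ ∪ supp P₂) ∧
    IsHole G (supp P₁ ∪ supp P₃) ∧
    IsHole G (supp P₂ ∪ supp P₃)

/-- `G` contains a prism as an induced subgraph. -/
def HasPrism (G : SimpleGraph V) : Prop :=
  ∃ (a₁ a₂ a₃ b₁ b₂ b₃ : V) (P₁ : G.Walk a₁ b₁) (P₂ : G.Walk a₂ b₂)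
      (P₃ : G.Walk a₃ b₃),
    G.Adj a₁ a₂ ∧ G.Adj a₂ a₃ ∧ G.Adj a₁ a₃ ∧
    G.Adj b₁ b₂ ∧ G.Adj b₂ b₃ ∧ G.Adj b₁ b₃ ∧
    P₁.IsPath ∧ P₂.IsPath ∧ P₃.IsPath ∧
    (∀ v, v ∈ P₁.support → v ∉ P₂.support) ∧
    (∀ v, v ∈ P₁.support → v ∉ P₃.support) ∧
    (∀ v, v ∈ P₂.support → v ∉ P₃.support) ∧
    IsHole G (supp P₁ ∪ supp P₂) ∧
    IsHole G (supp P₁ ∪ supp P₃) ∧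
    IsHole G (supp P₂ ∪ supp P₃)

/-- `G` contains a turtle as an induced subgraph. -/
def HasTurtle (G : SimpleGraph V) : Prop :=
  ∃ (a₁ b₁ a₂ b₂ x y : V) (P₁ : G.Walk a₁ b₁) (P₂ : G.Walk a₂ b₂),
    P₁.IsPath ∧ P₂.IsPath ∧
    (∀ v, v ∈ P₁.support → v ∉ P₂.support) ∧
    G.Adj a₁ a₂ ∧ G.Adj b₁ b₂ ∧ G.Adj x y ∧
    x ∉ P₁.support ∧ x ∉ P₂.support ∧ y ∉ P₁.support ∧ y ∉ P₂.support ∧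
    IsHole G (supp P₁ ∪ supp P₂) ∧
    3 ≤ (nbrsIn G x (supp P₁)).ncard ∧
    (∀ v ∈ P₂.support, ¬ G.Adj x v) ∧
    3 ≤ (nbrsIn G y (supp P₂)).ncard ∧
    (∀ v ∈ P₁.support, ¬ G.Adj y v)

/-- `G` contains no theta, pyramid, prism, or turtle as an induced subgraph. -/
def TPPTFree (G : SimpleGraph V) : Prop :=
  ¬ HasTheta G ∧ ¬ HasPyramid G ∧ ¬ HasPrism G ∧ ¬ HasTurtle G

/-- The neighborhood of a set `X`: all vertices outside `X` with a neighbor in `X`. -/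
def setNbrs (G : SimpleGraph V) (X : Set V) : Set V :=
  {v | v ∉ X ∧ ∃ x ∈ X, G.Adj x v}

/-- `A` is a connected component of `G ∖ C`. -/
def IsCompOf (G : SimpleGraph V) (C A : Set V) : Prop :=
  A.Nonempty ∧ Disjoint A C ∧ (G.induce A).Connected ∧
    ∀ a ∈ A, ∀ b : V, G.Adj a b → b ∉ C → b ∈ A

/-- `C` is a minimal separator of `G`: there are two distinct components `L`, `R`
of `G ∖ C` with `N(L) = N(R) = C`. -/
def IsMinSep (G : SimpleGraph V) (C : Set V) : Prop :=
  ∃ L R : Set V, IsCompOf G C L ∧ IsCompOf G C R ∧ L ≠ R ∧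
    setNbrs G L = C ∧ setNbrs G R = C

/-- A proper separator: a minimal separator that is not a clique. -/
def IsProperSep (G : SimpleGraph V) (C : Set V) : Prop :=
  IsMinSep G C ∧ ¬ (∀ a ∈ C, ∀ b ∈ C, a ≠ b → G.Adj a b)

/-- `u` is a minor vertex for the hole `H`: `u ∉ H`, `u` has a neighbor in `H` and
all its neighbors in `H` lie in a path of `H` with at most three vertices. -/
def IsMinorFor (G : SimpleGraph V) (u : V) (H : Set V) : Prop :=
  u ∉ H ∧ (nbrsIn G u H).Nonempty ∧
    ∃ a b c : V, a ∈ H ∧ b ∈ H ∧ c ∈ H ∧ G.Adj a b ∧ G.Adj b c ∧ a ≠ c ∧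
      nbrsIn G u H ⊆ {a, b, c}

/-- `u` is a major vertex for the hole `H`. -/
def IsMajorFor (G : SimpleGraph V) (u : V) (H : Set V) : Prop :=
  u ∉ H ∧ (nbrsIn G u H).Nonempty ∧ ¬ IsMinorFor G u H

/-- `u` is a pendant of `H`: it has a unique neighbor in `H`. -/
def IsPendant (G : SimpleGraph V) (u : V) (H : Set V) : Prop :=
  u ∉ H ∧ ∃ a : V, nbrsIn G u H = {a}

/-- `u` is a cap of `H`: it has exactly two neighbors in `H` and they are adjacent. -/
def IsCap (G : SimpleGraph V) (u : V) (H : Set V) : Prop :=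
  u ∉ H ∧ ∃ a b : V, a ≠ b ∧ G.Adj a b ∧ nbrsIn G u H = {a, b}

/-- `u` is a clone of `y` in `H`: its neighbors in `H` are exactly the three
vertices of a path `x-y-z` of `H`. -/
def IsCloneOf (G : SimpleGraph V) (u y : V) (H : Set V) : Prop :=
  u ∉ H ∧ ∃ x z : V, x ∈ H ∧ y ∈ H ∧ z ∈ H ∧ G.Adj x y ∧ G.Adj y z ∧ x ≠ z ∧
    nbrsIn G u H = {x, y, z}

/-- `u` is a clone (of some vertex) in `H`. -/
def IsClone (G : SimpleGraph V) (u : V) (H : Set V) : Prop :=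
  ∃ y, IsCloneOf G u y H

/-- `P` is a `u`-sector of the hole `H`: a path contained in `H` whose ends are
neighbors of `u` and whose interior is anticomplete to `u`. -/
def IsSector (G : SimpleGraph V) (u : V) (H : Set V) {a b : V} (P : G.Walk a b) : Prop :=
  P.IsPath ∧ (∀ v ∈ P.support, v ∈ H) ∧ G.Adj u a ∧ G.Adj u b ∧
    ∀ v ∈ P.support, v ≠ a → v ≠ b → ¬ G.Adj u v

/-- `u` and `v` are nested with respect to the hole `H`: there are distinct
`a, b ∈ H` such that one `ab`-path of `H` contains all neighbors of `u` in `H`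
and the other `ab`-path of `H` contains all neighbors of `v` in `H`. -/
def Nested (G : SimpleGraph V) (u v : V) (H : Set V) : Prop :=
  ∃ a b : V, a ∈ H ∧ b ∈ H ∧ a ≠ b ∧
    ∃ (P Q : G.Walk a b), P.IsPath ∧ Q.IsPath ∧
      supp P ∪ supp Q = H ∧
      (∀ x, x ∈ P.support → x ∈ Q.support → x = a ∨ x = b) ∧
      (∀ x ∈ H, G.Adj u x → x ∈ P.support) ∧
      (∀ x ∈ H, G.Adj v x → x ∈ Q.support)

/-- `u` is a hub for the hole `H`: its neighbors in `H` are exactly four vertices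
`p, q, r, s` appearing in that order along `H`, with `pq, rs ∈ E(G)` and
`ps, qr ∉ E(G)`. -/
def IsHub (G : SimpleGraph V) (u : V) (H : Set V) : Prop :=
  u ∉ H ∧ ∃ (p q r s : V) (A : G.Walk q r) (B : G.Walk s p),
    p ≠ q ∧ p ≠ r ∧ p ≠ s ∧ q ≠ r ∧ q ≠ s ∧ r ≠ s ∧
    nbrsIn G u H = {p, q, r, s} ∧
    G.Adj p q ∧ G.Adj r s ∧ ¬ G.Adj p s ∧ ¬ G.Adj q r ∧
    A.IsPath ∧ B.IsPath ∧
    (∀ v, v ∈ A.support → v ∉ B.support) ∧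
    supp A ∪ supp B = H

/-- `N` is an extended neighborhood of `w` in the hole `H`. -/
def IsExtNbhd (G : SimpleGraph V) (w : V) (H N : Set V) : Prop :=
  ∃ (x y x' y' : V) (Q : G.Walk x y),
    IsSector G w H Q ∧
    x' ∈ H ∧ x' ∉ Q.support ∧ G.Adj x' x ∧
    y' ∈ H ∧ y' ∉ Q.support ∧ G.Adj y' y ∧
    N = supp Q ∪ ({x', y'} ∩ nbrsIn G w H)

/-- `a` and `b` are distant in `H` with respect to `w`: no extended neighborhood
of `w` in `H` contains both `a` and `b`. -/
def Distant (G : SimpleGraph V) (w : V) (H : Set V) (a b : V) : Prop :=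
  a ∈ H ∧ b ∈ H ∧ ∀ N : Set V, IsExtNbhd G w H N → ¬ (a ∈ N ∧ b ∈ N)

/-- `P` is an `(H, w)`-significant path. -/
def IsSignificant (G : SimpleGraph V) (w : V) (H : Set V) {p q : V}
    (P : G.Walk p q) : Prop :=
  P.IsPath ∧ ∃ a b : V, a ∈ H ∧ G.Adj p a ∧ ¬ G.Adj w a ∧ b ∈ H ∧ G.Adj q b ∧
    Distant G w H a b

/-- `v` is a gem-center for the hole `H`. -/
def IsGemCenter (G : SimpleGraph V) (v : V) (H : Set V) : Prop :=
  5 ≤ H.ncard ∧ ∃ h₁ h₂ h₃ h₄ : V, h₁ ∈ H ∧ h₂ ∈ H ∧ h₃ ∈ H ∧ h₄ ∈ H ∧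
    G.Adj h₁ h₂ ∧ G.Adj h₂ h₃ ∧ G.Adj h₃ h₄ ∧ h₁ ≠ h₃ ∧ h₁ ≠ h₄ ∧ h₂ ≠ h₄ ∧
    nbrsIn G v H = {h₁, h₂, h₃, h₄}

/-- `x` is the center of a star cutset of `G`. -/
def IsStarCutsetCenter (G : SimpleGraph V) (x : V) : Prop :=
  ∃ X : Set V, x ∈ X ∧ (∀ y ∈ X, y ≠ x → G.Adj x y) ∧
    ¬ (G.induce (Xᶜ)).Preconnected

/-- `v` is `(c₁, c₂)`-heavy with respect to the hole `H`. -/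
def IsHeavy (G : SimpleGraph V) (c₁ c₂ : V) (H : Set V) (v : V) : Prop :=
  IsMajorFor G v H ∧ Distant G v H c₁ c₂

/-- The pair of paths `HL`, `HR` forms a `(C, c₁, c₂)`-hole with frame
`(c₁, c₂, ℓ₁', ℓ₁, r₁, r₁', ℓ₂', ℓ₂, r₂, r₂')`, where `L` and `R` are the two
full components of the proper separator `C`. -/
def IsCHoleWithFrame (G : SimpleGraph V) (C L R : Set V)
    (c₁ c₂ ℓ₁ ℓ₁' ℓ₂ ℓ₂' r₁ r₁' r₂ r₂' : V) (HL HR : G.Walk c₁ c₂) : Prop :=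
  HL.IsPath ∧ HR.IsPath ∧
  (∀ v, v ∈ HL.support → v ∈ HR.support → v = c₁ ∨ v = c₂) ∧
  IsHole G (supp HL ∪ supp HR) ∧
  c₁ ∈ C ∧ c₂ ∈ C ∧
  (∀ v, v ∈ HL.support → v ≠ c₁ → v ≠ c₂ → v ∈ L) ∧
  (∀ v, v ∈ HR.support → v ≠ c₁ → v ≠ c₂ → v ∈ R) ∧
  (supp HL ∪ supp HR) ∩ C = {c₁, c₂} ∧
  ℓ₁ ∈ HL.support ∧ ℓ₁ ≠ c₂ ∧ G.Adj c₁ ℓ₁ ∧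
  ℓ₂ ∈ HL.support ∧ ℓ₂ ≠ c₁ ∧ G.Adj c₂ ℓ₂ ∧
  r₁ ∈ HR.support ∧ r₁ ≠ c₂ ∧ G.Adj c₁ r₁ ∧
  r₂ ∈ HR.support ∧ r₂ ≠ c₁ ∧ G.Adj c₂ r₂ ∧
  ((ℓ₁ = ℓ₂ ∧ ℓ₁' = ℓ₁) ∨
    (ℓ₁ ≠ ℓ₂ ∧ ℓ₁' ∈ HL.support ∧ ℓ₁' ≠ c₁ ∧ ℓ₁' ≠ c₂ ∧ G.Adj ℓ₁ ℓ₁')) ∧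
  ((ℓ₁ = ℓ₂ ∧ ℓ₂' = ℓ₂) ∨
    (ℓ₁ ≠ ℓ₂ ∧ ℓ₂' ∈ HL.support ∧ ℓ₂' ≠ c₁ ∧ ℓ₂' ≠ c₂ ∧ G.Adj ℓ₂ ℓ₂')) ∧
  ((r₁ = r₂ ∧ r₁' = r₁) ∨
    (r₁ ≠ r₂ ∧ r₁' ∈ HR.support ∧ r₁' ≠ c₁ ∧ r₁' ≠ c₂ ∧ G.Adj r₁ r₁')) ∧
  ((r₁ = r₂ ∧ r₂' = r₂) ∨
    (r₁ ≠ r₂ ∧ r₂' ∈ HR.support ∧ r₂' ≠ c₁ ∧ r₂' ≠ c₂ ∧ G.Adj r₂ r₂'))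

/-- The 3-dimensional hypercube graph: vertices are elements of `{0,1}³`, two
vertices being adjacent exactly when they differ in one coordinate. -/
def cubeGraph : SimpleGraph (Fin 3 → Bool) where
  Adj x y := ∃! i, x i ≠ y i
  symm := ⟨by
    rintro x y ⟨i, hi, hj⟩
    exact ⟨i, Ne.symm hi, fun j h => hj j (Ne.symm h)⟩⟩
  loopless := ⟨by
    rintro x ⟨i, hi, -⟩
    exact hi rfl⟩

/-! ### Auxiliary lemmas for `heavy_of_interior_neighbors` -/

section Aux

variable {G : SimpleGraph V}

lemma walk_getLast' {a b : V} (p : G.Walk a b) : p.support.getLast? = some b := by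
  rw [List.getLast?_eq_getLast (l := p.support) (by simp), Walk.getLast_support]

lemma second_vertex {a b : V} (W : G.Walk a b) (hab : a ≠ b) :
    ∃ s, G.Adj a s ∧ s ∈ W.support ∧ W.support = a :: s :: W.support.tail.tail := by
  cases W with
  | nil => exact absurd rfl hab
  | @cons _ s _ h q =>
    refine ⟨s, h, ?_, ?_⟩
    · rw [Walk.support_cons]
      exact List.mem_cons_of_mem _ q.start_mem_support
    · rw [Walk.support_cons, List.tail_cons]
      exact congrArg _ q.support_eq_cons

lemma comp_subset {C A B : Set V} (hA : IsCompOf G C A) (hB : IsCompOf G C B)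
    {x : V} (hxA : x ∈ A) (hxB : x ∈ B) : B ⊆ A := by
  intro y hy
  obtain ⟨p⟩ : (G.induce B).Reachable ⟨x, hxB⟩ ⟨y, hy⟩ := hB.2.2.1.preconnected _ _
  have key : ∀ (u w : B) (p : (G.induce B).Walk u w), (u : V) ∈ A → (w : V) ∈ A := by
    intro u w p
    induction p with
    | nil => exact id
    | @cons u' v' w' h q ih =>
      intro hu
      refine ih ?_
      have hadj : G.Adj (u' : V) (v' : V) := h
      have hnC : (v' : V) ∉ C := fun hc => (hB.2.1.le_bot ⟨v'.2, hc⟩)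
      exact hA.2.2.2 _ hu _ hadj hnC
  exact key _ _ p hxA

lemma comp_eq {C A B : Set V} (hA : IsCompOf G C A) (hB : IsCompOf G C B)
    {x : V} (hxA : x ∈ A) (hxB : x ∈ B) : A = B :=
  le_antisymm (comp_subset hB hA hxB hxA) (comp_subset hA hB hxA hxB)

lemma pair_eq_of_ncard {s : Set V} (hfin : s.Finite) (h2 : s.ncard = 2) {a b : V}
    (ha : a ∈ s) (hb : b ∈ s) (hab : a ≠ b) : s = {a, b} := by
  refine (Set.eq_of_subset_of_ncard_le ?_ ?_ hfin).symm
  · rintro z (rfl | rfl) <;> assumption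
  · rw [h2, Set.ncard_pair hab]

lemma listUC (H : Set V)
    (hnb : ∀ b a c c' : V, b ∈ H → a ∈ H → c ∈ H → c' ∈ H → G.Adj b a → G.Adj b c →
      G.Adj b c' → a ≠ c → a ≠ c' → c = c') :
    ∀ (S : List V) (a b : V) (T : List V),
      List.Chain' G.Adj (a :: b :: S) → List.Chain' G.Adj (a :: b :: T) →
      (a :: b :: S).Nodup → (a :: b :: T).Nodup →
      (∀ x ∈ a :: b :: S, x ∈ H) → (∀ x ∈ a :: b :: T, x ∈ H) →
      (a :: b :: S).getLast? = (a :: b :: T).getLast? → S = T := by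
  intro S
  induction S with
  | nil =>
    intro a b T hcS hcT hnS hnT hmS hmT hlast
    cases T with
    | nil => rfl
    | cons t T' =>
      exfalso
      rw [List.getLast?_cons_cons, List.getLast?_cons_cons, List.getLast?_cons_cons] at hlast
      have hb : ([b] : List V).getLast? = some b := rfl
      rw [hb] at hlast
      have hmem : b ∈ t :: T' := List.mem_of_getLast? hlast.symm
      simp only [List.nodup_cons] at hnT
      exact hnT.2.1 hmem
  | cons c S' ih =>
    intro a b T hcS hcT hnS hnT hmS hmT hlast
    cases T with
    | nil =>
      exfalso
      rw [List.getLast?_cons_cons, List.getLast?_cons_cons, List.getLast?_cons_cons] at hlast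
      have hb : ([b] : List V).getLast? = some b := rfl
      rw [hb] at hlast
      have hmem : b ∈ c :: S' := List.mem_of_getLast? hlast
      simp only [List.nodup_cons] at hnS
      exact hnS.2.1 hmem
    | cons c' T' =>
      have hab : G.Adj a b := hcS.rel_head
      have hbc : G.Adj b c := hcS.tail.rel_head
      have hbc' : G.Adj b c' := hcT.tail.rel_head
      have hac : a ≠ c := by
        simp only [List.nodup_cons, List.mem_cons] at hnS
        exact fun h => hnS.1 (by simp [h])
      have hac' : a ≠ c' := by
        simp only [List.nodup_cons, List.mem_cons] at hnT
        exact fun h => hnT.1 (by simp [h])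
      have hcc : c = c' := hnb b a c c' (hmS b (by simp)) (hmS a (by simp))
        (hmS c (by simp)) (hmT c' (by simp)) hab.symm hbc hbc' hac hac'
      subst hcc
      have hST : S' = T' := by
        refine ih b c T' hcS.tail hcT.tail hnS.of_cons hnT.of_cons
          (fun x hx => hmS x (List.mem_cons_of_mem _ hx))
          (fun x hx => hmT x (List.mem_cons_of_mem _ hx)) ?_
        rw [List.getLast?_cons_cons] at hlast
        rw [List.getLast?_cons_cons] at hlast
        exact hlast
      rw [hST]

variable [DecidableEq V]

lemma start_dropUntil' {x y : V} {Q : G.Walk x y} (hQ : Q.IsPath) {c : V} (hc : c ∈ Q.support)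
    (hx : x ∈ (Q.dropUntil c hc).support) : x = c := by
  have hsp := Q.take_spec hc
  have hnd := hQ.support_nodup
  rw [← hsp, Walk.support_append] at hnd
  have hdisj := List.disjoint_of_nodup_append hnd
  rcases List.eq_or_mem_of_mem_cons ((Q.dropUntil c hc).support_eq_cons ▸ hx) with h | h
  · exact h
  · exact absurd h (hdisj ((Q.takeUntil c hc).start_mem_support))

lemma end_takeUntil' {x y : V} {Q : G.Walk x y} (hQ : Q.IsPath) {c : V} (hc : c ∈ Q.support)
    (hy : y ∈ (Q.takeUntil c hc).support) : y = c := by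
  have hsp := Q.take_spec hc
  have hnd := hQ.support_nodup
  rw [← hsp, Walk.support_append] at hnd
  have hdisj := List.disjoint_of_nodup_append hnd
  rcases List.eq_or_mem_of_mem_cons
      ((Q.dropUntil c hc).support_eq_cons ▸ (Q.dropUntil c hc).end_mem_support) with h | h
  · exact h
  · exact absurd h (hdisj hy)

/-- A path between `c1` and `c2` inside `H` all of whose interior vertices adjacent
to `v` are adjacent to `c1` or `c2`. -/
def GoodPath (G : SimpleGraph V) (v : V) (H : Set V) {c1 c2 : V} (P : G.Walk c1 c2) : Prop :=
  P.IsPath ∧ (∀ w ∈ P.support, w ∈ H) ∧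
  (∀ w ∈ P.support, w ≠ c1 → w ≠ c2 → G.Adj v w → G.Adj c1 w ∨ G.Adj c2 w)

lemma GoodPath.flip {v : V} {H : Set V} {c1 c2 : V} {P : G.Walk c1 c2}
    (h : GoodPath G v H P) : GoodPath G v H P.reverse := by
  obtain ⟨h1, h2, h3⟩ := h
  refine ⟨h1.reverse, ?_, ?_⟩
  · intro w hw
    rw [Walk.support_reverse, List.mem_reverse] at hw
    exact h2 w hw
  · intro w hw hw2 hw1 hvw
    rw [Walk.support_reverse, List.mem_reverse] at hw
    exact (h3 w hw hw1 hw2 hvw).symm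

variable {v : V} {H : Set V} {x y x' y' : V} {Q : G.Walk x y}

lemma bpA (hQp : Q.IsPath) (hQH : ∀ w ∈ Q.support, w ∈ H)
    (hsec : ∀ w ∈ Q.support, w ≠ x → w ≠ y → ¬ G.Adj v w)
    {c1 c2 : V} (hc1 : c1 ∈ Q.support) (hc2 : c2 ∈ Q.support) :
    ∃ P : G.Walk c1 c2, GoodPath G v H P := by
  by_cases hc2' : c2 ∈ (Q.dropUntil c1 hc1).support
  · refine ⟨(Q.dropUntil c1 hc1).takeUntil c2 hc2', (hQp.dropUntil hc1).takeUntil hc2', ?_, ?_⟩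
    · intro w hw
      exact hQH w (Q.support_dropUntil_subset hc1 (Walk.support_takeUntil_subset _ hc2' hw))
    · intro w hw hwc1 hwc2 hvw
      by_cases hwx : w = x
      · subst hwx
        exact absurd (start_dropUntil' hQp hc1 (Walk.support_takeUntil_subset _ hc2' hw)) hwc1
      by_cases hwy : w = y
      · subst hwy
        exact absurd (end_takeUntil' (hQp.dropUntil hc1) hc2' hw) hwc2
      exact absurd hvw (hsec w
        (Q.support_dropUntil_subset hc1 (Walk.support_takeUntil_subset _ hc2' hw)) hwx hwy)
  · have hc2'' : c2 ∈ (Q.takeUntil c1 hc1).support := by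
      have h := hc2
      rw [← Q.take_spec hc1, Walk.mem_support_append_iff] at h
      exact h.resolve_right hc2'
    refine ⟨((Q.takeUntil c1 hc1).dropUntil c2 hc2'').reverse,
      ((hQp.takeUntil hc1).dropUntil hc2'').reverse, ?_, ?_⟩
    · intro w hw
      rw [Walk.support_reverse, List.mem_reverse] at hw
      exact hQH w (Q.support_takeUntil_subset hc1
        ((Q.takeUntil c1 hc1).support_dropUntil_subset hc2'' hw))
    · intro w hw hwc1 hwc2 hvw
      rw [Walk.support_reverse, List.mem_reverse] at hw
      by_cases hwx : w = x
      · subst hwx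
        exact absurd (start_dropUntil' (hQp.takeUntil hc1) hc2'' hw) hwc2
      by_cases hwy : w = y
      · subst hwy
        exact absurd (end_takeUntil' hQp hc1
          ((Q.takeUntil c1 hc1).support_dropUntil_subset hc2'' hw)) hwc1
      exact absurd hvw (hsec w (Q.support_takeUntil_subset hc1
        ((Q.takeUntil c1 hc1).support_dropUntil_subset hc2'' hw)) hwx hwy)

lemma bpD (hQp : Q.IsPath) (hQH : ∀ w ∈ Q.support, w ∈ H)
    (hsec : ∀ w ∈ Q.support, w ≠ x → w ≠ y → ¬ G.Adj v w)
    (hx'Q : x' ∉ Q.support) (hxx' : G.Adj x' x) (hx'H : x' ∈ H)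
    {c2 : V} (hc2 : c2 ∈ Q.support) :
    ∃ P : G.Walk x' c2, GoodPath G v H P := by
  refine ⟨Walk.cons hxx' (Q.takeUntil c2 hc2),
    ((hQp.takeUntil hc2).cons (fun h => hx'Q (Q.support_takeUntil_subset hc2 h))), ?_, ?_⟩
  · intro w hw
    rw [Walk.support_cons, List.mem_cons] at hw
    rcases hw with rfl | hw
    · exact hx'H
    · exact hQH w (Q.support_takeUntil_subset hc2 hw)
  · intro w hw hwc1 hwc2 hvw
    rw [Walk.support_cons, List.mem_cons] at hw
    rcases hw with rfl | hw
    · exact absurd rfl hwc1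
    by_cases hwx : w = x
    · subst hwx; exact Or.inl hxx'
    by_cases hwy : w = y
    · subst hwy
      exact absurd (end_takeUntil' hQp hc2 hw) hwc2
    exact absurd hvw (hsec w (Q.support_takeUntil_subset hc2 hw) hwx hwy)

lemma bpE (hQp : Q.IsPath) (hQH : ∀ w ∈ Q.support, w ∈ H)
    (hsec : ∀ w ∈ Q.support, w ≠ x → w ≠ y → ¬ G.Adj v w)
    (hy'Q : y' ∉ Q.support) (hyy' : G.Adj y' y) (hy'H : y' ∈ H)
    {c2 : V} (hc2 : c2 ∈ Q.support) :
    ∃ P : G.Walk y' c2, GoodPath G v H P := by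
  refine ⟨Walk.cons hyy' (Q.dropUntil c2 hc2).reverse,
    (((hQp.dropUntil hc2).reverse).cons (fun h => hy'Q (Q.support_dropUntil_subset hc2
      (by rwa [Walk.support_reverse, List.mem_reverse] at h)))), ?_, ?_⟩
  · intro w hw
    rw [Walk.support_cons, List.mem_cons, Walk.support_reverse, List.mem_reverse] at hw
    rcases hw with rfl | hw
    · exact hy'H
    · exact hQH w (Q.support_dropUntil_subset hc2 hw)
  · intro w hw hwc1 hwc2 hvw
    rw [Walk.support_cons, List.mem_cons, Walk.support_reverse, List.mem_reverse] at hw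
    rcases hw with rfl | hw
    · exact absurd rfl hwc1
    by_cases hwy : w = y
    · subst hwy; exact Or.inl hyy'
    by_cases hwx : w = x
    · subst hwx
      exact absurd (start_dropUntil' hQp hc2 hw) hwc2
    exact absurd hvw (hsec w (Q.support_dropUntil_subset hc2 hw) hwx hwy)

lemma bpF (hQp : Q.IsPath) (hQH : ∀ w ∈ Q.support, w ∈ H)
    (hsec : ∀ w ∈ Q.support, w ≠ x → w ≠ y → ¬ G.Adj v w)
    (hx'Q : x' ∉ Q.support) (hxx' : G.Adj x' x) (hx'H : x' ∈ H)
    (hy'Q : y' ∉ Q.support) (hyy' : G.Adj y' y) (hy'H : y' ∈ H)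
    (hne : x' ≠ y') :
    ∃ P : G.Walk x' y', GoodPath G v H P := by
  have hin : (Walk.cons hyy' Q.reverse).IsPath := by
    refine (hQp.reverse).cons ?_
    rw [Walk.support_reverse, List.mem_reverse]
    exact hy'Q
  have hsup : ∀ w, w ∈ (Walk.cons hyy' Q.reverse).reverse.support ↔
      (w = y' ∨ w ∈ Q.support) := by
    intro w
    rw [Walk.support_reverse, List.mem_reverse, Walk.support_cons, List.mem_cons,
      Walk.support_reverse, List.mem_reverse]
  refine ⟨Walk.cons hxx' (Walk.cons hyy' Q.reverse).reverse,
    (hin.reverse).cons (fun h => ?_), ?_, ?_⟩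
  · rcases (hsup x').mp h with h' | h'
    · exact hne h'
    · exact hx'Q h'
  · intro w hw
    rw [Walk.support_cons, List.mem_cons] at hw
    rcases hw with rfl | hw
    · exact hx'H
    rcases (hsup w).mp hw with rfl | hw'
    · exact hy'H
    · exact hQH w hw'
  · intro w hw hwc1 hwc2 hvw
    rw [Walk.support_cons, List.mem_cons] at hw
    rcases hw with rfl | hw
    · exact absurd rfl hwc1
    rcases (hsup w).mp hw with rfl | hw'
    · exact absurd rfl hwc2
    by_cases hwx : w = x
    · subst hwx; exact Or.inl hxx'
    by_cases hwy : w = y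
    · subst hwy; exact Or.inr hyy'
    exact absurd hvw (hsec w hw' hwx hwy)

lemma buildPath (hQp : Q.IsPath) (hQH : ∀ w ∈ Q.support, w ∈ H)
    (hsec : ∀ w ∈ Q.support, w ≠ x → w ≠ y → ¬ G.Adj v w)
    (hx'Q : x' ∉ Q.support) (hxx' : G.Adj x' x) (hx'H : x' ∈ H)
    (hy'Q : y' ∉ Q.support) (hyy' : G.Adj y' y) (hy'H : y' ∈ H)
    {c1 c2 : V} (h12 : c1 ≠ c2)
    (hc1 : c1 ∈ Q.support ∨ c1 = x' ∨ c1 = y')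
    (hc2 : c2 ∈ Q.support ∨ c2 = x' ∨ c2 = y') :
    ∃ P : G.Walk c1 c2, GoodPath G v H P := by
  rcases hc1 with h1 | h1 | h1 <;> rcases hc2 with h2 | h2 | h2
  · exact bpA hQp hQH hsec h1 h2
  · subst h2
    obtain ⟨P, hP⟩ := bpD hQp hQH hsec hx'Q hxx' hx'H h1
    exact ⟨P.reverse, hP.flip⟩
  · subst h2
    obtain ⟨P, hP⟩ := bpE hQp hQH hsec hy'Q hyy' hy'H h1
    exact ⟨P.reverse, hP.flip⟩
  · subst h1
    exact bpD hQp hQH hsec hx'Q hxx' hx'H h2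
  · exact absurd (h1.trans h2.symm) h12
  · subst h1; subst h2
    exact bpF hQp hQH hsec hx'Q hxx' hx'H hy'Q hyy' hy'H h12
  · subst h1
    exact bpE hQp hQH hsec hy'Q hyy' hy'H h2
  · subst h1; subst h2
    obtain ⟨P, hP⟩ := bpF hQp hQH hsec hx'Q hxx' hx'H hy'Q hyy' hy'H h12.symm
    exact ⟨P.reverse, hP.flip⟩
  · exact absurd (h1.trans h2.symm) h12

end Aux

/-- In a (theta, pyramid, prism, turtle)-free graph, let `C` be a proper
separator with full components `L`, `R`, and let `H` be a `(C, c₁, c₂)`-hole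
with frame `(c₁, c₂, ℓ₁', ℓ₁, r₁, r₁', ℓ₂', ℓ₂, r₂, r₂')`.  If
`v ∈ V(G)∖V(H)` has a neighbor in `H_L^* ∖ {ℓ₁, ℓ₂}` and a neighbor in
`H_R^* ∖ {r₁, r₂}`, then `v` is `(c₁, c₂)`-heavy with respect to `H`. -/
theorem heavy_of_interior_neighbors {V : Type*} (G : SimpleGraph V)
    (hG : TPPTFree G) (C L R : Set V)
    (c₁ c₂ ℓ₁ ℓ₁' ℓ₂ ℓ₂' r₁ r₁' r₂ r₂' : V)
    (hCsep : IsMinSep G C)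
    (hCnotclique : ¬ (∀ a ∈ C, ∀ b ∈ C, a ≠ b → G.Adj a b))
    (hL : IsCompOf G C L ∧ setNbrs G L = C)
    (hR : IsCompOf G C R ∧ setNbrs G R = C) (hLR : L ≠ R)
    (HL HR : G.Walk c₁ c₂)
    (hfr : IsCHoleWithFrame G C L R c₁ c₂ ℓ₁ ℓ₁' ℓ₂ ℓ₂' r₁ r₁' r₂ r₂' HL HR)
    (v : V) (hv : v ∉ supp HL ∪ supp HR)
    (hvL : ∃ z ∈ HL.support, z ≠ c₁ ∧ z ≠ c₂ ∧ z ≠ ℓ₁ ∧ z ≠ ℓ₂ ∧ G.Adj v z)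
    (hvR : ∃ z ∈ HR.support, z ≠ c₁ ∧ z ≠ c₂ ∧ z ≠ r₁ ∧ z ≠ r₂ ∧ G.Adj v z) :
    IsHeavy G c₁ c₂ (supp HL ∪ supp HR) v := by
  classical
  set H := supp HL ∪ supp HR with hHdef
  obtain ⟨hpL, hpR, hmeet, hhole, hc1C, hc2C, hLmem, hRmem, hHC,
    hl1s, hl1ne2, hadj1l, hl2s, hl2ne1, hadj2l,
    hr1s, hr1ne2, hadj1r, hr2s, hr2ne1, hadj2r, _, _, _, _⟩ := hfr
  obtain ⟨hHfin, hH4, hHconn, hHdeg⟩ := hhole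
  obtain ⟨hLcomp, hLnb⟩ := hL
  obtain ⟨hRcomp, hRnb⟩ := hR
  obtain ⟨zL, hzLs, hzL1, hzL2, hzLl1, hzLl2, hvzL⟩ := hvL
  obtain ⟨zR, hzRs, hzR1, hzR2, hzRr1, hzRr2, hvzR⟩ := hvR
  have hmemH : ∀ w, w ∈ H ↔ w ∈ HL.support ∨ w ∈ HR.support := fun w => Iff.rfl
  have hsuppLH : ∀ w ∈ HL.support, w ∈ H := fun w hw => (hmemH w).mpr (Or.inl hw)
  have hsuppRH : ∀ w ∈ HR.support, w ∈ H := fun w hw => (hmemH w).mpr (Or.inr hw)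
  have hLRdisj : Disjoint L R := by
    rw [Set.disjoint_left]
    intro a haL haR
    exact hLR (comp_eq hLcomp hRcomp haL haR)
  have hLRadj : ∀ a ∈ L, ∀ b ∈ R, ¬ G.Adj a b := by
    intro a ha b hb hadj
    have hbC : b ∉ C := fun hc => (hRcomp.2.1.le_bot ⟨hb, hc⟩)
    have hbL : b ∈ L := hLcomp.2.2.2 a ha b hadj hbC
    exact (Set.disjoint_left.mp hLRdisj hbL) hb
  have hc1H : c₁ ∈ H := hsuppLH _ HL.start_mem_support
  have hc2H : c₂ ∈ H := hsuppLH _ HL.end_mem_support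
  have h12 : c₁ ≠ c₂ := by
    rintro rfl
    have hnil : HL = Walk.nil := (Walk.isPath_iff_eq_nil (p := HL)).mp hpL
    rw [hnil, Walk.support_nil, List.mem_singleton] at hzLs
    exact hzL1 hzLs
  have hl1L : ℓ₁ ∈ L := hLmem ℓ₁ hl1s hadj1l.ne' hl1ne2
  have hl2L : ℓ₂ ∈ L := hLmem ℓ₂ hl2s hl2ne1 hadj2l.ne'
  have hr1R : r₁ ∈ R := hRmem r₁ hr1s hadj1r.ne' hr1ne2
  have hr2R : r₂ ∈ R := hRmem r₂ hr2s hr2ne1 hadj2r.ne'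
  have hzLL : zL ∈ L := hLmem zL hzLs hzL1 hzL2
  have hzRR : zR ∈ R := hRmem zR hzRs hzR1 hzR2
  have hnbfin : ∀ u : V, (nbrsIn G u H).Finite := fun u => hHfin.subset (fun w hw => hw.1)
  have hnb1 : nbrsIn G c₁ H = {ℓ₁, r₁} :=
    pair_eq_of_ncard (hnbfin c₁) (hHdeg c₁ hc1H) ⟨hsuppLH _ hl1s, hadj1l⟩
      ⟨hsuppRH _ hr1s, hadj1r⟩ (fun h => Set.disjoint_left.mp hLRdisj hl1L (h ▸ hr1R))
  have hnb2 : nbrsIn G c₂ H = {ℓ₂, r₂} :=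
    pair_eq_of_ncard (hnbfin c₂) (hHdeg c₂ hc2H) ⟨hsuppLH _ hl2s, hadj2l⟩
      ⟨hsuppRH _ hr2s, hadj2r⟩ (fun h => Set.disjoint_left.mp hLRdisj hl2L (h ▸ hr2R))
  have hadjc1 : ∀ w, w ∈ H → G.Adj c₁ w → w = ℓ₁ ∨ w = r₁ := by
    intro w hw ha
    have hmem : w ∈ nbrsIn G c₁ H := ⟨hw, ha⟩
    rw [hnb1] at hmem
    exact hmem
  have hadjc2 : ∀ w, w ∈ H → G.Adj c₂ w → w = ℓ₂ ∨ w = r₂ := by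
    intro w hw ha
    have hmem : w ∈ nbrsIn G c₂ H := ⟨hw, ha⟩
    rw [hnb2] at hmem
    exact hmem
  have hnadj12 : ¬ G.Adj c₁ c₂ := by
    intro h
    rcases hadjc1 c₂ hc2H h with h' | h'
    · exact hl1ne2 h'.symm
    · exact hr1ne2 h'.symm
  have hzLH : zL ∈ H := hsuppLH _ hzLs
  have hzRH : zR ∈ H := hsuppRH _ hzRs
  have hnc1zL : ¬ G.Adj c₁ zL := by
    intro h
    rcases hadjc1 zL hzLH h with h' | h'
    · exact hzLl1 h'
    · exact Set.disjoint_left.mp hLRdisj hzLL (h' ▸ hr1R)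
  have hnc2zL : ¬ G.Adj c₂ zL := by
    intro h
    rcases hadjc2 zL hzLH h with h' | h'
    · exact hzLl2 h'
    · exact Set.disjoint_left.mp hLRdisj hzLL (h' ▸ hr2R)
  have hnc1zR : ¬ G.Adj c₁ zR := by
    intro h
    rcases hadjc1 zR hzRH h with h' | h'
    · exact Set.disjoint_left.mp hLRdisj (h' ▸ hl1L) hzRR
    · exact hzRr1 h'
  have hnc2zR : ¬ G.Adj c₂ zR := by
    intro h
    rcases hadjc2 zR hzRH h with h' | h'
    · exact Set.disjoint_left.mp hLRdisj (h' ▸ hl2L) hzRR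
    · exact hzRr2 h'
  have hloc : ∀ w, w ∈ H → w = c₁ ∨ w = c₂ ∨ w ∈ L ∨ w ∈ R := by
    intro w hw
    by_cases h1 : w = c₁
    · exact Or.inl h1
    by_cases h2 : w = c₂
    · exact Or.inr (Or.inl h2)
    rcases (hmemH w).mp hw with hwl | hwr
    · exact Or.inr (Or.inr (Or.inl (hLmem w hwl h1 h2)))
    · exact Or.inr (Or.inr (Or.inr (hRmem w hwr h1 h2)))
  have hzLzR : zL ≠ zR := fun h => Set.disjoint_left.mp hLRdisj hzLL (h ▸ hzRR)
  have hnadjz : ¬ G.Adj zL zR := hLRadj zL hzLL zR hzRR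
  constructor
  · -- `v` is major for `H`
    refine ⟨hv, ⟨zL, hzLH, hvzL⟩, ?_⟩
    rintro ⟨-, -, a, b, c, haH, hbH, hcH, hab, hbc, hac, hsub⟩
    have hzLm : zL ∈ ({a, b, c} : Set V) := hsub ⟨hzLH, hvzL⟩
    have hzRm : zR ∈ ({a, b, c} : Set V) := hsub ⟨hzRH, hvzR⟩
    simp only [Set.mem_insert_iff, Set.mem_singleton_iff] at hzLm hzRm
    have hbzLzR : G.Adj b zL → G.Adj b zR → False := by
      intro h1 h2
      rcases hloc b hbH with rfl | rfl | hbL | hbR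
      · exact hnc1zL h1
      · exact hnc2zL h1
      · exact hLRadj b hbL zR hzRR h2
      · exact hLRadj zL hzLL b hbR h1.symm
    rcases hzLm with h1 | h1 | h1 <;> rcases hzRm with h2 | h2 | h2
    · exact hzLzR (h1.trans h2.symm)
    · subst h1; subst h2; exact hnadjz hab
    · subst h1; subst h2; exact hbzLzR hab.symm hbc
    · subst h1; subst h2; exact hnadjz hab.symm
    · exact hzLzR (h1.trans h2.symm)
    · subst h1; subst h2; exact hnadjz hbc
    · subst h1; subst h2; exact hbzLzR hbc hab.symm
    · subst h1; subst h2; exact hnadjz hbc.symm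
    · exact hzLzR (h1.trans h2.symm)
  · -- `c₁` and `c₂` are distant with respect to `v`
    refine ⟨hc1H, hc2H, ?_⟩
    rintro N ⟨x, y, x', y', Q, ⟨hQp, hQH, hvx, hvy, hsecQ⟩,
      hx'H, hx'Q, hxx', hy'H, hy'Q, hyy', rfl⟩ ⟨hc1N, hc2N⟩
    simp only [Set.mem_union, Set.mem_inter_iff, Set.mem_insert_iff,
      Set.mem_singleton_iff] at hc1N hc2N
    have hc1' : c₁ ∈ Q.support ∨ c₁ = x' ∨ c₁ = y' := by
      rcases hc1N with h | h
      · exact Or.inl h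
      · exact Or.inr h.1
    have hc2' : c₂ ∈ Q.support ∨ c₂ = x' ∨ c₂ = y' := by
      rcases hc2N with h | h
      · exact Or.inl h
      · exact Or.inr h.1
    obtain ⟨P, hPp, hPH, hPint⟩ :=
      buildPath hQp hQH hsecQ hx'Q hxx' hx'H hy'Q hyy' hy'H h12 hc1' hc2'
    have hnbH : ∀ b a c c' : V, b ∈ H → a ∈ H → c ∈ H → c' ∈ H → G.Adj b a → G.Adj b c →
        G.Adj b c' → a ≠ c → a ≠ c' → c = c' := by
      intro b a c c' hb ha hc hc' h1 h2 h3 h4 h5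
      have hpair : nbrsIn G b H = {a, c} :=
        pair_eq_of_ncard (hnbfin b) (hHdeg b hb) ⟨ha, h1⟩ ⟨hc, h2⟩ h4
      have hmem : c' ∈ nbrsIn G b H := ⟨hc', h3⟩
      rw [hpair] at hmem
      rcases hmem with rfl | rfl
      · exact absurd rfl h5
      · rfl
    obtain ⟨s, hads, hsP, hPshape⟩ := second_vertex P h12
    have hsH : s ∈ H := hPH s hsP
    obtain ⟨sL, hadsL, hsLmem, hHLshape⟩ := second_vertex HL h12
    obtain ⟨sR, hadsR, hsRmem, hHRshape⟩ := second_vertex HR h12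
    have hsLl1 : sL = ℓ₁ := by
      rcases hadjc1 sL (hsuppLH _ hsLmem) hadsL with h' | h'
      · exact h'
      · exfalso
        have hsLne2 : sL ≠ c₂ := fun h => hnadj12 (h ▸ hadsL)
        have hsLL : sL ∈ L := hLmem sL hsLmem hadsL.ne' hsLne2
        exact Set.disjoint_left.mp hLRdisj hsLL (h' ▸ hr1R)
    have hsRr1 : sR = r₁ := by
      rcases hadjc1 sR (hsuppRH _ hsRmem) hadsR with h' | h'
      · exfalso
        have hsRne2 : sR ≠ c₂ := fun h => hnadj12 (h ▸ hadsR)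
        have hsRR : sR ∈ R := hRmem sR hsRmem hadsR.ne' hsRne2
        exact Set.disjoint_left.mp hLRdisj (h' ▸ hl1L) hsRR
      · exact h'
    subst hsLl1
    subst hsRr1
    rcases hadjc1 s hsH hads with hseq | hseq
    · -- the path `P` follows `HL`, so it passes through `zL`
      rw [← hseq] at hHLshape
      have hchW := SimpleGraph.Walk.isChain_adj_support HL
      have hchP := SimpleGraph.Walk.isChain_adj_support P
      rw [hHLshape] at hchW
      rw [hPshape] at hchP
      have hndW := hpL.support_nodup
      have hndP := hPp.support_nodup
      rw [hHLshape] at hndW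
      rw [hPshape] at hndP
      have hlW := walk_getLast' HL
      have hlP := walk_getLast' P
      rw [hHLshape] at hlW
      rw [hPshape] at hlP
      have hTT := listUC H hnbH HL.support.tail.tail c₁ s P.support.tail.tail
        hchW hchP hndW hndP
        (fun w hw => hsuppLH w (by rw [hHLshape]; exact hw))
        (fun w hw => hPH w (by rw [hPshape]; exact hw))
        (hlW.trans hlP.symm)
      have hsupEq : HL.support = P.support := by
        rw [hHLshape, hPshape, hTT]
      have hzLP : zL ∈ P.support := hsupEq ▸ hzLs
      rcases hPint zL hzLP hzL1 hzL2 hvzL with h | h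
      · exact hnc1zL h
      · exact hnc2zL h
    · -- the path `P` follows `HR`, so it passes through `zR`
      rw [← hseq] at hHRshape
      have hchW := SimpleGraph.Walk.isChain_adj_support HR
      have hchP := SimpleGraph.Walk.isChain_adj_support P
      rw [hHRshape] at hchW
      rw [hPshape] at hchP
      have hndW := hpR.support_nodup
      have hndP := hPp.support_nodup
      rw [hHRshape] at hndW
      rw [hPshape] at hndP
      have hlW := walk_getLast' HR
      have hlP := walk_getLast' P
      rw [hHRshape] at hlW
      rw [hPshape] at hlP
      have hTT := listUC H hnbH HR.support.tail.tail c₁ s P.support.tail.tail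
        hchW hchP hndW hndP
        (fun w hw => hsuppRH w (by rw [hHRshape]; exact hw))
        (fun w hw => hPH w (by rw [hPshape]; exact hw))
        (hlW.trans hlP.symm)
      have hsupEq : HR.support = P.support := by
        rw [hHRshape, hPshape, hTT]
      have hzRP : zR ∈ P.support := hsupEq ▸ hzRs
      rcases hPint zR hzRP hzR1 hzR2 hvzR with h | h
      · exact hnc1zR h
      · exact hnc2zR h


end Paper
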